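/- For all β > 0, K > 0 and R > 0, the tight trumpet partition function equals e^{2Rβ} times the JT trumpet partition function; explicitly, (1/(2√(πβ)))·e^{−K²/(4β)} + ∫_K^∞ b · (1/(2√(πβ)))·e^{−b²/(4β)} · √(2R/(b² − K²)) · I₁(√(b² − K²)·√(2R)) db = (1/(2√(πβ)))·e^{−K²/(4β) + 2Rβ}. -/

import Mathlib

open Real MeasureTheory

/-- Modified Bessel function of the first kind of integer order `ν`. -/
noncomputable def besselI (ν : ℕ) (x : ℝ) : ℝ :=
  ∑' k : ℕ, (x / 2) ^ (2 * k + ν) / ((Nat.factorial k : ℝ) * (Nat.factorial (k + ν) : ℝ))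

lemma besselI_one_expand {R u : ℝ} (hR : 0 < R) (hu : 0 < u) :
    Real.sqrt (2 * R / u) * besselI 1 (Real.sqrt u * Real.sqrt (2 * R)) =
    ∑' k : ℕ, R ^ (k + 1) * u ^ k / (2 ^ k * (Nat.factorial k : ℝ) *
      (Nat.factorial (k + 1) : ℝ)) := by
  set s := Real.sqrt u with hsdef
  set t := Real.sqrt (2 * R) with htdef
  have hs0 : 0 < s := Real.sqrt_pos.mpr hu
  have ht0 : 0 < t := Real.sqrt_pos.mpr (by positivity)
  have hs : s ^ 2 = u := Real.sq_sqrt hu.le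
  have ht : t ^ 2 = 2 * R := Real.sq_sqrt (by positivity)
  have hdiv : Real.sqrt (2 * R / u) = t / s := by
    rw [htdef, hsdef, Real.sqrt_div (by positivity)]
  rw [hdiv, besselI, ← tsum_mul_left]
  refine tsum_congr fun k => ?_
  have e1 : (s * t / 2) ^ (2 * k + 1) = (s ^ 2 * t ^ 2) ^ k * (s * t) / 2 ^ (2 * k + 1) := by
    rw [div_pow, pow_succ, pow_mul, mul_pow]
  have e2 : (2:ℝ) ^ (2 * k + 1) = 2 ^ k * 2 ^ k * 2 := by
    rw [pow_succ, two_mul, pow_add]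
  have hk1 : ((Nat.factorial k : ℝ)) ≠ 0 := by positivity
  have hk2 : ((Nat.factorial (k + 1) : ℝ)) ≠ 0 := by positivity
  rw [e1, hs, ht, e2]
  field_simp
  linear_combination (u ^ k * R ^ k * 2 ^ k) * ht

lemma image_sq_sub {K : ℝ} (hK : 0 < K) :
    (fun b : ℝ => b ^ 2 - K ^ 2) '' Set.Ioi K = Set.Ioi 0 := by
  ext y
  simp only [Set.mem_image, Set.mem_Ioi]
  constructor
  · rintro ⟨b, hb, rfl⟩; nlinarith
  · intro hy
    refine ⟨Real.sqrt (y + K ^ 2), ?_, ?_⟩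
    · exact (Real.lt_sqrt (by positivity)).mpr (by linarith)
    · rw [Real.sq_sqrt (by positivity)]; ring

lemma hasDeriv_sq_sub {K : ℝ} : ∀ x ∈ Set.Ioi K,
    HasDerivWithinAt (fun b : ℝ => b ^ 2 - K ^ 2) (2 * x) (Set.Ioi K) x := by
  intro x _
  simpa using ((hasDerivAt_pow 2 x).sub_const (K ^ 2)).hasDerivWithinAt

lemma injOn_sq_sub {K : ℝ} (hK : 0 < K) :
    Set.InjOn (fun b : ℝ => b ^ 2 - K ^ 2) (Set.Ioi K) := by
  intro a ha b hb h
  simp only [Set.mem_Ioi] at ha hb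
  simp only at h
  have h2 : a ^ 2 = b ^ 2 := by linarith
  apply le_antisymm <;> nlinarith

lemma cov_integral {K : ℝ} (hK : 0 < K) (F : ℝ → ℝ) :
    ∫ u in Set.Ioi 0, F u = ∫ b in Set.Ioi K, 2 * b * F (b ^ 2 - K ^ 2) := by
  rw [← image_sq_sub hK,
    integral_image_eq_integral_abs_deriv_smul measurableSet_Ioi hasDeriv_sq_sub
      (injOn_sq_sub hK) F]
  refine setIntegral_congr_fun measurableSet_Ioi fun b hb => ?_
  have hb0 : (0:ℝ) < b := hK.trans hb
  rw [smul_eq_mul, abs_of_pos (by positivity)]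

lemma cov_integrable {K : ℝ} (hK : 0 < K) (F : ℝ → ℝ)
    (hF : IntegrableOn F (Set.Ioi 0)) :
    IntegrableOn (fun b => 2 * b * F (b ^ 2 - K ^ 2)) (Set.Ioi K) := by
  have h := integrableOn_image_iff_integrableOn_abs_deriv_smul measurableSet_Ioi
    hasDeriv_sq_sub (injOn_sq_sub hK) F
  rw [image_sq_sub hK] at h
  refine (h.mp hF).congr_fun (fun b hb => ?_) measurableSet_Ioi
  have hb0 : (0:ℝ) < b := hK.trans hb
  dsimp only
  rw [smul_eq_mul, abs_of_pos (by positivity)]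

lemma integral_pow_exp {β : ℝ} (hβ : 0 < β) (k : ℕ) :
    ∫ u in Set.Ioi 0, u ^ k * Real.exp (-(u / (4 * β))) =
      (4 * β) ^ (k + 1) * (Nat.factorial k : ℝ) := by
  have h := Real.integral_rpow_mul_exp_neg_mul_Ioi (a := (k : ℝ) + 1) (r := (4 * β)⁻¹)
      (by positivity) (by positivity)
  rw [show ((k:ℝ) + 1 - 1) = (k:ℝ) by ring] at h
  rw [setIntegral_congr_fun measurableSet_Ioi
    (fun t ht => by
      simp only []
      rw [Real.rpow_natCast, inv_mul_eq_div] : Set.EqOn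
        (fun t : ℝ => t ^ (k:ℝ) * Real.exp (-((4*β)⁻¹ * t)))
        (fun t : ℝ => t ^ k * Real.exp (-(t / (4*β)))) (Set.Ioi 0))] at h
  rw [h, one_div, inv_inv, Real.Gamma_nat_eq_factorial,
    show ((k:ℝ) + 1) = ((k+1 : ℕ):ℝ) by push_cast; ring, Real.rpow_natCast]

lemma integrable_pow_exp {β : ℝ} (hβ : 0 < β) (k : ℕ) :
    IntegrableOn (fun u : ℝ => u ^ k * Real.exp (-(u / (4 * β)))) (Set.Ioi 0) := by
  have h := integrableOn_rpow_mul_exp_neg_mul_rpow (s := (k:ℝ)) (p := 1) (b := (4*β)⁻¹)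
      (by exact_mod_cast neg_one_lt_zero.trans_le (Nat.cast_nonneg k)) one_pos (by positivity)
  refine h.congr_fun (fun t ht => ?_) measurableSet_Ioi
  dsimp only
  rw [Real.rpow_natCast, Real.rpow_one, neg_mul, inv_mul_eq_div]

set_option maxHeartbeats 1000000 in
theorem stmt10 (β K R : ℝ) (hβ : 0 < β) (hK : 0 < K) (hR : 0 < R) :
    1 / (2 * Real.sqrt (π * β)) * Real.exp (-K ^ 2 / (4 * β)) +
      (∫ b in Set.Ioi K, b * (1 / (2 * Real.sqrt (π * β)) * Real.exp (-b ^ 2 / (4 * β))) *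
        (Real.sqrt (2 * R / (b ^ 2 - K ^ 2)) *
          besselI 1 (Real.sqrt (b ^ 2 - K ^ 2) * Real.sqrt (2 * R)))) =
      1 / (2 * Real.sqrt (π * β)) * Real.exp (-K ^ 2 / (4 * β) + 2 * R * β) := by
  have hπβ : (0:ℝ) < Real.sqrt (π * β) := Real.sqrt_pos.mpr (by positivity)
  set C : ℝ := 1 / (2 * Real.sqrt (π * β)) with hC
  have hC0 : (0:ℝ) < C := by positivity
  set A : ℝ := C * Real.exp (-K ^ 2 / (4 * β)) with hA
  have hA0 : (0:ℝ) < A := by positivity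
  set c : ℕ → ℝ := fun k => A *
      (R ^ (k + 1) / (2 ^ (k + 1) * (Nat.factorial k : ℝ) * (Nat.factorial (k + 1) : ℝ)))
    with hc
  have hc0 : ∀ k, 0 < c k := fun k => by rw [hc]; positivity
  set f : ℕ → ℝ → ℝ := fun k b => 2 * b * ((fun u => c k *
      (u ^ k * Real.exp (-(u / (4 * β))))) (b ^ 2 - K ^ 2)) with hf
  -- pointwise expansion of the integrand
  have hpt : ∀ b ∈ Set.Ioi K,
      b * (C * Real.exp (-b ^ 2 / (4 * β))) *
        (Real.sqrt (2 * R / (b ^ 2 - K ^ 2)) *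
          besselI 1 (Real.sqrt (b ^ 2 - K ^ 2) * Real.sqrt (2 * R))) =
      ∑' k : ℕ, f k b := by
    intro b hb
    have hb0 : (0:ℝ) < b := hK.trans hb
    have hu : (0:ℝ) < b ^ 2 - K ^ 2 := by
      have : K < b := hb
      nlinarith
    rw [besselI_one_expand hR hu, ← tsum_mul_left]
    refine tsum_congr fun k => ?_
    have hexp : Real.exp (-b ^ 2 / (4 * β)) =
        Real.exp (-K ^ 2 / (4 * β)) * Real.exp (-((b ^ 2 - K ^ 2) / (4 * β))) := by
      rw [← Real.exp_add]
      congr 1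
      field_simp
      ring
    rw [hf, hc, hexp]
    simp only []
    have hk1 : ((Nat.factorial k : ℝ)) ≠ 0 := by positivity
    have hk2 : ((Nat.factorial (k + 1) : ℝ)) ≠ 0 := by positivity
    rw [hA]
    field_simp
    ring
  -- value of each integral
  have hval : ∀ k : ℕ, (∫ b in Set.Ioi K, f k b) =
      A * ((2 * R * β) ^ (k + 1) / (Nat.factorial (k + 1) : ℝ)) := by
    intro k
    rw [hf]
    rw [← cov_integral hK (fun u => c k * (u ^ k * Real.exp (-(u / (4 * β)))))]
    rw [integral_const_mul, integral_pow_exp hβ k]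
    rw [hc]
    have h2β : (4:ℝ) * β = 2 * (2 * β) := by ring
    have h2Rβ : (2:ℝ) * R * β = R * (2 * β) := by ring
    rw [h2β, h2Rβ, mul_pow, mul_pow]
    have hk1 : ((Nat.factorial k : ℝ)) ≠ 0 := by positivity
    have hk2 : ((Nat.factorial (k + 1) : ℝ)) ≠ 0 := by positivity
    field_simp
    ring
  -- integrability
  have hintg : ∀ k : ℕ, IntegrableOn (f k) (Set.Ioi K) := by
    intro k
    rw [hf]
    exact cov_integrable hK (fun u => c k * (u ^ k * Real.exp (-(u / (4 * β)))))
      ((integrable_pow_exp hβ k).const_mul (c k))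
  -- nonnegativity
  have hfnn : ∀ k : ℕ, ∀ b ∈ Set.Ioi K, 0 ≤ f k b := by
    intro k b hb
    have hb0 : (0:ℝ) < b := hK.trans hb
    have hu : (0:ℝ) ≤ b ^ 2 - K ^ 2 := by
      have : K < b := hb
      nlinarith
    exact mul_nonneg (by linarith) (mul_nonneg (hc0 k).le
      (mul_nonneg (pow_nonneg hu k) (Real.exp_nonneg _)))
  -- summability of the norms
  have hS : Summable fun k : ℕ => ∫ b in Set.Ioi K, ‖f k b‖ := by
    have heq : (fun k : ℕ => ∫ b in Set.Ioi K, ‖f k b‖) =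
        fun k : ℕ => A * ((2 * R * β) ^ (k + 1) / (Nat.factorial (k + 1) : ℝ)) := by
      funext k
      rw [← hval k]
      exact setIntegral_congr_fun measurableSet_Ioi fun b hb =>
        Real.norm_of_nonneg (hfnn k b hb)
    rw [heq]
    have h0 := (Real.summable_pow_div_factorial (2 * R * β)).mul_left A
    exact (summable_nat_add_iff 1).mpr h0
  have hswap := MeasureTheory.integral_tsum_of_summable_integral_norm
    (μ := volume.restrict (Set.Ioi K)) (fun k => hintg k) hS
  have hmain : (∫ b in Set.Ioi K, b * (C * Real.exp (-b ^ 2 / (4 * β))) *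
        (Real.sqrt (2 * R / (b ^ 2 - K ^ 2)) *
          besselI 1 (Real.sqrt (b ^ 2 - K ^ 2) * Real.sqrt (2 * R)))) =
      A * (Real.exp (2 * R * β) - 1) := by
    rw [setIntegral_congr_fun measurableSet_Ioi hpt, ← hswap, tsum_congr hval, tsum_mul_left]
    congr 1
    have hs : Summable (fun n : ℕ => (2 * R * β) ^ n / (Nat.factorial n : ℝ)) :=
      Real.summable_pow_div_factorial _
    have hexp : Real.exp (2 * R * β) = ∑' n : ℕ, (2 * R * β) ^ n / (Nat.factorial n : ℝ) := by
      rw [Real.exp_eq_exp_ℝ, NormedSpace.exp_eq_tsum_div]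
    rw [hexp, Summable.tsum_eq_zero_add hs]
    simp [Nat.factorial]
  rw [hmain, Real.exp_add]
  ring
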